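/- Let ι be a finite index set, H a complex inner product space, (U_i)_{i∈ι} a family of unitary operators on H, and S ⊆ ι. Let U and Ũ_S be the block operators on the ℓ²-direct sum ⊕_{i∈ι} H given by (U v)_i = U_i v_i and (Ũ_S v)_i = U_i v_i for i ∈ S, (Ũ_S v)_i = v_i for i ∉ S. Then for every v ∈ ⊕_{i∈ι} H, Re⟨Ũ_S v, U v⟩ ≥ Σ_{i∈S} ‖v_i‖² − Σ_{i∉S} ‖v_i‖². In particular, if ‖v‖ = 1 then Re⟨Ũ_S v, U v⟩ ≥ 1 − 2 Σ_{i∉S} ‖v_i‖². -/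

import Mathlib

/-- The (real-part) fidelity estimate of Lemma 3.1 (averaging costs): for the block
(controlled) unitaries `U` and `Ũ_S` on the ℓ²-direct sum `⊕_{i∈ι} H`,
`Re⟨Ũ_S v, U v⟩ ≥ Σ_{i∈S} ‖v_i‖² − Σ_{i∉S} ‖v_i‖²`, and if `‖v‖ = 1` then
`Re⟨Ũ_S v, U v⟩ ≥ 1 − 2 Σ_{i∉S} ‖v_i‖²`. -/
theorem stmt_2 {ι : Type*} [Fintype ι] [DecidableEq ι] {H : Type*}
    [NormedAddCommGroup H] [InnerProductSpace ℂ H]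
    (U : ι → (H ≃ₗᵢ[ℂ] H)) (S : Finset ι) (v : PiLp 2 (fun _ : ι => H)) :
    ((inner ℂ ((WithLp.equiv 2 (∀ _ : ι, H)).symm
               (fun i => if i ∈ S then U i (v i) else v i))
            ((WithLp.equiv 2 (∀ _ : ι, H)).symm (fun i => U i (v i))) : ℂ)).re
        ≥ (∑ i ∈ S, ‖v i‖ ^ 2) - ∑ i ∈ Sᶜ, ‖v i‖ ^ 2 ∧
    (‖v‖ = 1 →
      ((inner ℂ ((WithLp.equiv 2 (∀ _ : ι, H)).symm
                 (fun i => if i ∈ S then U i (v i) else v i))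
              ((WithLp.equiv 2 (∀ _ : ι, H)).symm (fun i => U i (v i))) : ℂ)).re
        ≥ 1 - 2 * ∑ i ∈ Sᶜ, ‖v i‖ ^ 2) := by
  have key : ((inner ℂ ((WithLp.equiv 2 (∀ _ : ι, H)).symm
               (fun i => if i ∈ S then U i (v i) else v i))
            ((WithLp.equiv 2 (∀ _ : ι, H)).symm (fun i => U i (v i))) : ℂ)).re
        ≥ (∑ i ∈ S, ‖v i‖ ^ 2) - ∑ i ∈ Sᶜ, ‖v i‖ ^ 2 := by
    rw [PiLp.inner_apply]
    simp only [Complex.re_sum]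
    rw [← Finset.sum_add_sum_compl S]
    have h1 : ∀ i ∈ S, (inner ℂ ((WithLp.equiv 2 (∀ _ : ι, H)).symm
        (fun i => if i ∈ S then U i (v i) else v i) i)
        ((WithLp.equiv 2 (∀ _ : ι, H)).symm (fun i => U i (v i)) i) : ℂ).re
        = ‖v i‖ ^ 2 := by
      intro i hi
      simp only [WithLp.equiv_symm_apply, PiLp.toLp_apply, if_pos hi]
      rw [LinearIsometryEquiv.inner_map_map, ← @inner_self_eq_norm_sq ℂ]
      simp
    have h2 : ∀ i ∈ Sᶜ, (inner ℂ ((WithLp.equiv 2 (∀ _ : ι, H)).symm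
        (fun i => if i ∈ S then U i (v i) else v i) i)
        ((WithLp.equiv 2 (∀ _ : ι, H)).symm (fun i => U i (v i)) i) : ℂ).re
        ≥ -(‖v i‖ ^ 2) := by
      intro i hi
      simp only [WithLp.equiv_symm_apply, PiLp.toLp_apply, if_neg (Finset.mem_compl.mp hi)]
      have habs := Complex.abs_re_le_norm (inner ℂ (v i) (U i (v i)) : ℂ)
      have hcs := norm_inner_le_norm (𝕜 := ℂ) (v i) (U i (v i))
      simp only [LinearIsometryEquiv.norm_map] at hcs
      nlinarith [neg_abs_le ((inner ℂ (v i) (U i (v i)) : ℂ)).re, habs, hcs]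
    calc (∑ i ∈ S, _) + (∑ i ∈ Sᶜ, _) ≥ (∑ i ∈ S, ‖v i‖ ^ 2) + ∑ i ∈ Sᶜ, -(‖v i‖ ^ 2) := by
          gcongr with i hi
          · exact le_of_eq (h1 i hi).symm
          · exact h2 _ ‹_›
      _ = (∑ i ∈ S, ‖v i‖ ^ 2) - ∑ i ∈ Sᶜ, ‖v i‖ ^ 2 := by
          rw [Finset.sum_neg_distrib]; ring
  refine ⟨key, fun hv => ?_⟩
  have hnorm : (∑ i ∈ S, ‖v i‖ ^ 2) + ∑ i ∈ Sᶜ, ‖v i‖ ^ 2 = 1 := by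
    rw [Finset.sum_add_sum_compl]
    have := PiLp.norm_sq_eq_of_L2 (fun _ : ι => H) v
    rw [hv] at this; simpa using this.symm
  linarith
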